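/- If a monotone submodular integer-valued function f on subsets of a finite set E satisfies f(F) ≥ 1 for all nonempty F, then the family of subsets I ⊆ E satisfying |F| ≤ f(F) for all nonempty F ⊆ I forms the independent sets of a matroid on E. -/

import Mathlib

open Finset

attribute [local instance] Classical.propDecidable

noncomputable section

/-- The independence condition induced by a count function `f`:
`I` is independent iff `|F| ≤ f(F)` for every nonempty `F ⊆ I`. -/
def IndepBy {α : Type*} (f : Finset α → ℤ) (I : Finset α) : Prop :=
  ∀ F ⊆ I, F.Nonempty → (F.card : ℤ) ≤ f F

section IMAux

variable {α : Type*} [DecidableEq α] {E : Finset α} {f : Finset α → ℤ}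

lemma IM_absorb
    (hsub : ∀ X Y : Finset α, X ⊆ E → Y ⊆ E → f (X ∪ Y) + f (X ∩ Y) ≤ f X + f Y)
    {A B : Finset α} {e : α} (heE : e ∈ E) (hBE : B ⊆ E) (hAB : A ⊆ B) (heB : e ∉ B)
    (h : f (insert e A) ≤ f A) : f (insert e B) ≤ f B := by
  have h1 := hsub B (insert e A) hBE (insert_subset heE (hAB.trans hBE))
  have hu : B ∪ insert e A = insert e B := by
    ext x
    simp only [mem_union, mem_insert]
    constructor
    · rintro (hx | hx | hx)
      · exact Or.inr hx
      · exact Or.inl hx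
      · exact Or.inr (hAB hx)
    · rintro (hx | hx)
      · exact Or.inr (Or.inl hx)
      · exact Or.inl hx
  have hi : B ∩ insert e A = A := by
    ext x
    simp only [mem_inter, mem_insert]
    constructor
    · rintro ⟨hxB, (rfl | hx)⟩
      · exact absurd hxB heB
      · exact hx
    · intro hx; exact ⟨hAB hx, Or.inr hx⟩
  rw [hu, hi] at h1
  linarith

lemma IM_merge
    (hsub : ∀ X Y : Finset α, X ⊆ E → Y ⊆ E → f (X ∪ Y) + f (X ∩ Y) ≤ f X + f Y)
    {I : Finset α} (hIE : I ⊆ E) (hI : IndepBy f I)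
    {A : Finset α} (hAI : A ⊆ I) (hAf : f A ≤ A.card)
    (𝒯 : Finset (Finset α))
    (h𝒯 : ∀ T ∈ 𝒯, T ⊆ I ∧ f T ≤ T.card ∧ (T ∩ A).Nonempty) :
    f (A ∪ 𝒯.sup id) ≤ (A ∪ 𝒯.sup id).card ∧ A ∪ 𝒯.sup id ⊆ I := by
  classical
  revert h𝒯
  induction 𝒯 using Finset.induction_on with
  | empty => intro _; simpa using ⟨hAf, hAI⟩
  | @insert T 𝒯 hT ih =>
    intro h𝒯
    obtain ⟨hTI, hTf, hTA⟩ := h𝒯 T (mem_insert_self T 𝒯)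
    obtain ⟨ihf, ihI⟩ := ih (fun T' hT' => h𝒯 T' (mem_insert_of_mem hT'))
    set B := A ∪ 𝒯.sup id with hB
    have hset : A ∪ (insert T 𝒯).sup id = B ∪ T := by
      rw [Finset.sup_insert]
      show A ∪ (T ⊔ 𝒯.sup id) = (A ∪ 𝒯.sup id) ∪ T
      rw [Finset.sup_eq_union]
      ext x
      simp only [mem_union]
      tauto
    have hBI2 : B ∪ T ⊆ I := union_subset ihI hTI
    have hBE : B ⊆ E := ihI.trans hIE
    have hsub1 := hsub B T hBE (hTI.trans hIE)
    have hBT : (B ∩ T).Nonempty := by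
      obtain ⟨x, hx⟩ := hTA
      obtain ⟨hxT, hxA⟩ := mem_inter.mp hx
      exact ⟨x, mem_inter.mpr ⟨mem_union_left _ hxA, hxT⟩⟩
    have hIcap : ((B ∩ T).card : ℤ) ≤ f (B ∩ T) :=
      hI _ ((inter_subset_left).trans ihI) hBT
    have hcardz : ((B ∪ T).card : ℤ) + (B ∩ T).card = B.card + T.card := by
      exact_mod_cast card_union_add_card_inter B T
    constructor
    · rw [hset]
      linarith
    · rw [hset]; exact hBI2

lemma IM_partition
    (hsub : ∀ X Y : Finset α, X ⊆ E → Y ⊆ E → f (X ∪ Y) + f (X ∩ Y) ≤ f X + f Y)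
    {I : Finset α} (hIE : I ⊆ E) (hI : IndepBy f I) (A : α → Finset α)
    (W : Finset α)
    (hW : ∀ e ∈ W, (A e).Nonempty ∧ A e ⊆ I ∧ f (A e) ≤ (A e).card) :
    ∃ 𝒯 : Finset (Finset α),
      (∀ T ∈ 𝒯, T.Nonempty ∧ T ⊆ I ∧ f T ≤ T.card) ∧
      (∀ T ∈ 𝒯, ∀ T' ∈ 𝒯, T ≠ T' → T ∩ T' = ∅) ∧
      (∀ e ∈ W, ∃ T ∈ 𝒯, A e ⊆ T) := by
  classical
  revert hW
  induction W using Finset.induction_on with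
  | empty =>
    intro _
    exact ⟨∅, by simp, by simp, by simp⟩
  | @insert a s ha ih =>
    intro hW
    obtain ⟨𝒯₀, h1, h2, h3⟩ := ih (fun e he => hW e (mem_insert_of_mem he))
    obtain ⟨hAne, hAI, hAf⟩ := hW a (mem_insert_self a s)
    set 𝒯₁ := 𝒯₀.filter (fun T => (T ∩ A a).Nonempty) with h𝒯₁
    set U := A a ∪ 𝒯₁.sup id with hUdef
    have h𝒯₁sub : ∀ T ∈ 𝒯₁, T ⊆ I ∧ f T ≤ T.card ∧ (T ∩ A a).Nonempty := by
      intro T hT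
      have hT0 := mem_filter.mp hT
      exact ⟨(h1 T hT0.1).2.1, (h1 T hT0.1).2.2, hT0.2⟩
    obtain ⟨hUf, hUI⟩ := IM_merge hsub hIE hI hAI hAf 𝒯₁ h𝒯₁sub
    have hUne : U.Nonempty := by
      obtain ⟨x, hx⟩ := hAne
      exact ⟨x, mem_union_left _ hx⟩
    have hUdisj : ∀ T' ∈ 𝒯₀ \ 𝒯₁, U ∩ T' = ∅ := by
      intro T' hT'
      have hT'0 : T' ∈ 𝒯₀ := (mem_sdiff.mp hT').1
      have hT'n : ¬ (T' ∩ A a).Nonempty := by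
        intro hne
        exact (mem_sdiff.mp hT').2 (mem_filter.mpr ⟨hT'0, hne⟩)
      rw [eq_empty_iff_forall_notMem]
      intro x hx
      obtain ⟨hxU, hxT'⟩ := mem_inter.mp hx
      rcases mem_union.mp hxU with hxA | hxS
      · exact hT'n ⟨x, mem_inter.mpr ⟨hxT', hxA⟩⟩
      · obtain ⟨T, hT1, hxT⟩ := Finset.mem_sup.mp hxS
        have hT0 : T ∈ 𝒯₀ := (mem_filter.mp hT1).1
        have hne : T ≠ T' := by
          rintro rfl; exact hT'n (mem_filter.mp hT1).2
        have hTT' := h2 T hT0 T' hT'0 hne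
        have hxTT' : x ∈ T ∩ T' := mem_inter.mpr ⟨hxT, hxT'⟩
        rw [hTT'] at hxTT'
        exact absurd hxTT' (notMem_empty x)
    refine ⟨insert U (𝒯₀ \ 𝒯₁), ?_, ?_, ?_⟩
    · intro T hT
      rcases mem_insert.mp hT with rfl | hT
      · exact ⟨hUne, hUI, hUf⟩
      · exact h1 T (mem_sdiff.mp hT).1
    · intro T hT T' hT' hne
      rcases mem_insert.mp hT with rfl | hT0
      · rcases mem_insert.mp hT' with rfl | hT'0
        · exact absurd rfl hne
        · exact hUdisj T' hT'0
      · rcases mem_insert.mp hT' with rfl | hT'0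
        · rw [inter_comm]; exact hUdisj T hT0
        · exact h2 T (mem_sdiff.mp hT0).1 T' (mem_sdiff.mp hT'0).1 hne
    · intro e he
      rcases mem_insert.mp he with rfl | hes
      · exact ⟨U, mem_insert_self _ _, subset_union_left⟩
      · obtain ⟨T, hT0, hAT⟩ := h3 e hes
        by_cases hT1 : T ∈ 𝒯₁
        · refine ⟨U, mem_insert_self _ _, hAT.trans ?_⟩
          have hTle : T ⊆ 𝒯₁.sup id := Finset.le_sup (f := id) hT1
          exact hTle.trans subset_union_right
        · exact ⟨T, mem_insert_of_mem (mem_sdiff.mpr ⟨hT0, hT1⟩), hAT⟩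

lemma IM_absorb_many
    (hsub : ∀ X Y : Finset α, X ⊆ E → Y ⊆ E → f (X ∪ Y) + f (X ∩ Y) ≤ f X + f Y)
    {T : Finset α} (hTE : T ⊆ E) (A : α → Finset α)
    (S' : Finset α)
    (hS' : ∀ e ∈ S', e ∈ E ∧ e ∉ T ∧ A e ⊆ T ∧ f (insert e (A e)) ≤ f (A e)) :
    f (T ∪ S') ≤ f T := by
  classical
  revert hS'
  induction S' using Finset.induction_on with
  | empty => intro _; simp
  | @insert a s ha ih =>
    intro hS'
    obtain ⟨haE, haT, hAaT, habs⟩ := hS' a (mem_insert_self a s)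
    have hsE : T ∪ s ⊆ E := union_subset hTE (fun x hx => (hS' x (mem_insert_of_mem hx)).1)
    have h1 : f (insert a (T ∪ s)) ≤ f (T ∪ s) := by
      apply IM_absorb hsub haE hsE (hAaT.trans subset_union_left) ?_ habs
      intro hmem
      rcases mem_union.mp hmem with h | h
      · exact haT h
      · exact ha h
    have h2 := ih (fun e he => hS' e (mem_insert_of_mem he))
    calc f (T ∪ insert a s) = f (insert a (T ∪ s)) := by rw [union_insert]
    _ ≤ f (T ∪ s) := h1
    _ ≤ f T := h2

end IMAux

/-- a monotone submodular integer-valued function `f` with `f(F) ≥ 1` for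
all nonempty `F` induces a matroid on `E`: the sets `I ⊆ E` with `|F| ≤ f(F)` for all
nonempty `F ⊆ I` satisfy the independence axioms (empty set, hereditary, augmentation). -/
theorem induced_matroid_axioms {α : Type*} [DecidableEq α] (E : Finset α)
    (f : Finset α → ℤ)
    (hmono : ∀ X Y : Finset α, X ⊆ Y → Y ⊆ E → f X ≤ f Y)
    (hsub : ∀ X Y : Finset α, X ⊆ E → Y ⊆ E → f (X ∪ Y) + f (X ∩ Y) ≤ f X + f Y)
    (hpos : ∀ F ⊆ E, F.Nonempty → 1 ≤ f F) :
    IndepBy f (∅ : Finset α) ∧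
    (∀ I J : Finset α, J ⊆ E → IndepBy f J → I ⊆ J → IndepBy f I) ∧
    (∀ I J : Finset α, I ⊆ E → J ⊆ E → IndepBy f I → IndepBy f J → I.card < J.card →
      ∃ e ∈ J \ I, IndepBy f (insert e I)) := by
  refine ⟨?_, ?_, ?_⟩
  · intro F hF hne
    rw [subset_empty.mp hF] at hne
    exact absurd hne (by simp)
  · intro I J hJE hJ hIJ F hF hne
    exact hJ F (hF.trans hIJ) hne
  · intro I J hIE hJE hI hJ hlt
    by_contra hcon
    push_neg at hcon
    have hAex : ∀ e : α, ∃ Ae : Finset α, e ∈ J \ I →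
        Ae.Nonempty ∧ Ae ⊆ I ∧ f Ae ≤ Ae.card ∧ f (insert e Ae) ≤ f Ae := by
      intro e
      by_cases he : e ∈ J \ I
      · obtain ⟨heJ, heI⟩ := mem_sdiff.mp he
        have hnind := hcon e he
        rw [IndepBy] at hnind
        push_neg at hnind
        obtain ⟨F, hFsub, hFne, hFf⟩ := hnind
        have heF : e ∈ F := by
          by_contra heF
          have hFI : F ⊆ I := by
            intro x hx
            rcases mem_insert.mp (hFsub hx) with rfl | h
            · exact absurd hx heF
            · exact h
          exact absurd (hI F hFI hFne) (not_le.mpr hFf)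
        set Ae := F.erase e with hAe
        have hins : insert e Ae = F := insert_erase heF
        have hAeI : Ae ⊆ I := by
          intro x hx
          obtain ⟨hxe, hxF⟩ := mem_erase.mp hx
          rcases mem_insert.mp (hFsub hxF) with rfl | h
          · exact absurd rfl hxe
          · exact h
        have hAene : Ae.Nonempty := by
          rcases Ae.eq_empty_or_nonempty with hAee | hne
          · exfalso
            have hFe : F = {e} := by
              rw [← hins, hAee]; simp
            have h1 := hpos {e}
              (by intro x hx; rw [mem_singleton] at hx; subst hx; exact hJE heJ)
              ⟨e, mem_singleton_self e⟩
            rw [hFe] at hFf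
            simp only [card_singleton, Nat.cast_one] at hFf
            linarith
          · exact hne
        have hcard : (F.card : ℤ) = Ae.card + 1 := by
          rw [← hins, card_insert_of_notMem (notMem_erase e F)]
          push_cast; ring
        have hfAe_ge : (Ae.card : ℤ) ≤ f Ae := hI Ae hAeI hAene
        have hFE : F ⊆ E := hFsub.trans (insert_subset (hJE heJ) hIE)
        have hmono1 : f Ae ≤ f F :=
          hmono Ae F (by rw [← hins]; exact subset_insert e Ae) hFE
        rw [hcard] at hFf
        have hfF : f F ≤ (Ae.card : ℤ) := Int.lt_add_one_iff.mp hFf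
        exact ⟨Ae, fun _ => ⟨hAene, hAeI, by linarith, by rw [hins]; linarith⟩⟩
      · exact ⟨∅, fun h => absurd h he⟩
    choose A hA using hAex
    obtain ⟨𝒯, h1, h2, h3⟩ := IM_partition hsub hIE hI A (J \ I)
      (fun e he => ⟨(hA e he).1, (hA e he).2.1, (hA e he).2.2.1⟩)
    set S := fun T : Finset α => (J \ I).filter (fun e => A e ⊆ T) with hS
    have hcount : ∀ T ∈ 𝒯, (S T).card ≤ (T \ J).card := by
      intro T hT
      obtain ⟨hTne, hTI, hTf⟩ := h1 T hT
      rcases (S T).eq_empty_or_nonempty with hSe | hSne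
      · rw [hSe]; simp
      · have hST : ∀ e ∈ S T, e ∈ E ∧ e ∉ T ∧ A e ⊆ T ∧ f (insert e (A e)) ≤ f (A e) := by
          intro e he
          obtain ⟨heJI, hAeT⟩ := mem_filter.mp he
          obtain ⟨heJ, heI⟩ := mem_sdiff.mp heJI
          exact ⟨hJE heJ, fun h => heI (hTI h), hAeT, (hA e heJI).2.2.2⟩
        have h5 : f (T ∪ S T) ≤ f T := IM_absorb_many hsub (hTI.trans hIE) A (S T) hST
        have h6 : S T ∪ (T ∩ J) ⊆ J := by
          intro x hx
          rcases mem_union.mp hx with hx | hx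
          · exact (mem_sdiff.mp (mem_filter.mp hx).1).1
          · exact (mem_inter.mp hx).2
        have h7 := hJ _ h6 (by obtain ⟨x, hx⟩ := hSne; exact ⟨x, mem_union_left _ hx⟩)
        have h8 : f (S T ∪ (T ∩ J)) ≤ f (T ∪ S T) := by
          apply hmono
          · intro x hx
            rcases mem_union.mp hx with hx | hx
            · exact mem_union_right _ hx
            · exact mem_union_left _ (mem_inter.mp hx).1
          · exact union_subset (hTI.trans hIE)
              (fun x hx => hJE ((mem_sdiff.mp (mem_filter.mp hx).1).1))
        have hdisj : Disjoint (S T) (T ∩ J) := by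
          rw [disjoint_left]
          intro x hx hx2
          exact (mem_sdiff.mp (mem_filter.mp hx).1).2 (hTI (mem_inter.mp hx2).1)
        have hcard1 : (S T ∪ (T ∩ J)).card = (S T).card + (T ∩ J).card :=
          card_union_of_disjoint hdisj
        have hcard2 : (T ∩ J).card + (T \ J).card = T.card :=
          card_inter_add_card_sdiff T J
        rw [hcard1] at h7
        push_cast at h7
        rw [← hcard2] at hTf
        push_cast at hTf
        have hfinal : ((S T).card : ℤ) ≤ ((T \ J).card : ℤ) := by linarith
        exact_mod_cast hfinal
    have hcover : J \ I = 𝒯.biUnion S := by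
      ext e
      simp only [mem_biUnion]
      constructor
      · intro he
        obtain ⟨T, hT, hAT⟩ := h3 e he
        exact ⟨T, hT, mem_filter.mpr ⟨he, hAT⟩⟩
      · rintro ⟨T, hT, he⟩
        exact (mem_filter.mp he).1
    have hSdisj : ∀ T ∈ 𝒯, ∀ T' ∈ 𝒯, T ≠ T' → Disjoint (S T) (S T') := by
      intro T hT T' hT' hne
      rw [disjoint_left]
      intro e he he'
      have hAeT : A e ⊆ T := (mem_filter.mp he).2
      have hAeT' : A e ⊆ T' := (mem_filter.mp he').2
      obtain ⟨x, hx⟩ := (hA e (mem_filter.mp he).1).1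
      have hxTT' : x ∈ T ∩ T' := mem_inter.mpr ⟨hAeT hx, hAeT' hx⟩
      rw [h2 T hT T' hT' hne] at hxTT'
      exact absurd hxTT' (notMem_empty x)
    have hc1 : (J \ I).card = ∑ T ∈ 𝒯, (S T).card := by
      rw [hcover, card_biUnion hSdisj]
    have hc2 : ∑ T ∈ 𝒯, (S T).card ≤ ∑ T ∈ 𝒯, (T \ J).card :=
      Finset.sum_le_sum hcount
    have hTdisj : ∀ T ∈ 𝒯, ∀ T' ∈ 𝒯, T ≠ T' → Disjoint (T \ J) (T' \ J) := by
      intro T hT T' hT' hne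
      rw [disjoint_left]
      intro x hx hx'
      have hxTT' : x ∈ T ∩ T' := mem_inter.mpr ⟨(mem_sdiff.mp hx).1, (mem_sdiff.mp hx').1⟩
      rw [h2 T hT T' hT' hne] at hxTT'
      exact absurd hxTT' (notMem_empty x)
    have hc3 : ∑ T ∈ 𝒯, (T \ J).card = (𝒯.biUnion (fun T => T \ J)).card :=
      (card_biUnion hTdisj).symm
    have hc4 : (𝒯.biUnion (fun T => T \ J)).card ≤ (I \ J).card := by
      apply card_le_card
      intro x hx
      obtain ⟨T, hT, hxT⟩ := mem_biUnion.mp hx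
      exact mem_sdiff.mpr ⟨(h1 T hT).2.1 (mem_sdiff.mp hxT).1, (mem_sdiff.mp hxT).2⟩
    have e1 : (J \ I).card + (J ∩ I).card = J.card := card_sdiff_add_card_inter J I
    have e2 : (I \ J).card + (I ∩ J).card = I.card := card_sdiff_add_card_inter I J
    have e3 : (J ∩ I).card = (I ∩ J).card := by rw [inter_comm]
    omega
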